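/- In the product setting with each factor a full-dimensional simplex (d_s = m_s and u^s : [m_s+1] → ℝ^{m_s} affinely independent for every s ∈ [t]), if ω and ω′ are generic for the product, A^ω = A^{ω′}, and Θ(ω) = Θ(ω′), then ω = ω′. (The product slope map Θ is injective on each fiber of ω ↦ A^ω.) -/

import Mathlib

open scoped RealInnerProductSpace

/-- The slope `ρ^ω(i,j)` of the edge from vertex `u i` to vertex `u j`,
with respect to the objective direction `c`. -/
noncomputable def rho {n d : ℕ} (u : Fin n → EuclideanSpace ℝ (Fin d))
    (c ω : EuclideanSpace ℝ (Fin d)) (i j : Fin n) : ℝ :=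
  ⟪ω, u j - u i⟫ / ⟪c, u j - u i⟫

/-- `τ^ω(i)`: the maximal slope from vertex `i` to a later vertex
(the supremum of the finite set of slopes `ρ^ω(i,j)` for `i < j`;
it is meaningful for non-maximal `i`, where this set is nonempty). -/
noncomputable def tau {n d : ℕ} (u : Fin n → EuclideanSpace ℝ (Fin d))
    (c ω : EuclideanSpace ℝ (Fin d)) (i : Fin n) : ℝ :=
  sSup {x : ℝ | ∃ j : Fin n, i < j ∧ x = rho u c ω i j}

/-- `ω` is generic: for each non-maximal vertex `i` there is a unique `j > i`
whose slope attains the maximal slope `τ^ω(i)`. -/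
def Generic {n d : ℕ} (u : Fin n → EuclideanSpace ℝ (Fin d))
    (c ω : EuclideanSpace ℝ (Fin d)) : Prop :=
  ∀ i : Fin n, (i : ℕ) + 1 < n →
    ∃! j : Fin n, i < j ∧ rho u c ω i j = tau u c ω i

/-- `A` is the max-slope arborescence `A^ω`: it fixes the maximal vertex, and
sends every other vertex `i` to an improving neighbour attaining `τ^ω(i)`. -/
def IsArbo {n d : ℕ} (u : Fin n → EuclideanSpace ℝ (Fin d))
    (c ω : EuclideanSpace ℝ (Fin d)) (A : Fin n → Fin n) : Prop :=
  (∀ i : Fin n, (i : ℕ) + 1 = n → A i = i) ∧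
  (∀ i : Fin n, (i : ℕ) + 1 < n →
    i < A i ∧ rho u c ω i (A i) = tau u c ω i)

/-- The top vertex `(n_1, …, n_t)` of the product polytope. -/
def topVertex {t : ℕ} (m : Fin t → ℕ) : ∀ s : Fin t, Fin (m s + 1) :=
  fun s => Fin.last (m s)

/-- The maximal slope at a vertex `v` of the product polytope: the supremum of
the slopes to improving neighbours, i.e. of the `ρ^{ω_s}(v_s, j)` for `j > v_s`
(a finite set, nonempty when `v` is not the top vertex). -/
noncomputable def prodTau {t : ℕ} {m d : Fin t → ℕ}
    (u : ∀ s : Fin t, Fin (m s + 1) → EuclideanSpace ℝ (Fin (d s)))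
    (c ω : ∀ s : Fin t, EuclideanSpace ℝ (Fin (d s)))
    (v : ∀ s : Fin t, Fin (m s + 1)) : ℝ :=
  sSup {x : ℝ | ∃ s : Fin t, ∃ j : Fin (m s + 1),
    v s < j ∧ x = rho (u s) (c s) (ω s) (v s) j}

/-- `ω` is generic for the product: at each vertex other than the top vertex,
the maximal slope is attained by a unique improving neighbour (encoded by the
coordinate `s` that moves and its new value `j`). -/
def ProdGeneric {t : ℕ} {m d : Fin t → ℕ}
    (u : ∀ s : Fin t, Fin (m s + 1) → EuclideanSpace ℝ (Fin (d s)))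
    (c ω : ∀ s : Fin t, EuclideanSpace ℝ (Fin (d s))) : Prop :=
  ∀ v : ∀ s : Fin t, Fin (m s + 1), v ≠ topVertex m →
    ∃! p : (s : Fin t) × Fin (m s + 1),
      v p.1 < p.2 ∧ rho (u p.1) (c p.1) (ω p.1) (v p.1) p.2 = prodTau u c ω v

/-- `A` is the max-slope arborescence `A^ω` of the product: it fixes the top
vertex, and sends every other vertex `v` to an improving neighbour (differing
from `v` in a single, increased, coordinate) attaining the maximal slope. -/
def ProdIsArbo {t : ℕ} {m d : Fin t → ℕ}
    (u : ∀ s : Fin t, Fin (m s + 1) → EuclideanSpace ℝ (Fin (d s)))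
    (c ω : ∀ s : Fin t, EuclideanSpace ℝ (Fin (d s)))
    (A : (∀ s : Fin t, Fin (m s + 1)) → ∀ s : Fin t, Fin (m s + 1)) : Prop :=
  A (topVertex m) = topVertex m ∧
  ∀ v : ∀ s : Fin t, Fin (m s + 1), v ≠ topVertex m → ∃ s : Fin t,
    v s < A v s ∧ (∀ r : Fin t, r ≠ s → A v r = v r) ∧
    rho (u s) (c s) (ω s) (v s) (A v s) = prodTau u c ω v

/-- The product slope map `Θ`, sending `ω = (ω_1, …, ω_t)` to the concatenation
of the slope vectors of its factors: its coordinates are indexed by the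
disjoint union `Σ s, [m_s]`, ordered lexicographically (which is the canonical
order-isomorphism with `[m]`, `m = m_1 + ⋯ + m_t`, identifying `(s, i)` with
`M_{s-1} + i`). -/
noncomputable def prodTheta {t : ℕ} {m d : Fin t → ℕ}
    (u : ∀ s : Fin t, Fin (m s + 1) → EuclideanSpace ℝ (Fin (d s)))
    (c : ∀ s : Fin t, EuclideanSpace ℝ (Fin (d s)))
    (ω : ∀ s : Fin t, EuclideanSpace ℝ (Fin (d s))) :
    Lex ((s : Fin t) × Fin (m s)) → ℝ :=
  fun q => tau (u (ofLex q).1) (c (ofLex q).1) (ω (ofLex q).1)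
    (Fin.castSucc (ofLex q).2)

/-- `ω` is strongly generic for the product: it is generic for the product and
the `m = m_1 + ⋯ + m_t` coordinates of `Θ(ω)` are pairwise distinct. -/
def ProdStronglyGeneric {t : ℕ} {m d : Fin t → ℕ}
    (u : ∀ s : Fin t, Fin (m s + 1) → EuclideanSpace ℝ (Fin (d s)))
    (c ω : ∀ s : Fin t, EuclideanSpace ℝ (Fin (d s))) : Prop :=
  ProdGeneric u c ω ∧ Function.Injective (prodTheta u c ω)

/-- One step of the `(m_1, …, m_t)`-sylvester rewriting rule on permutations of
`[m] ≅ Σₗ s, [m_s]` (in one-line notation): the letters at two consecutive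
positions `a ⋖ b` may be exchanged whenever they lie in the same block `s` and
some letter strictly between them in value appears at an earlier position
(`U j V i k W ≡ U j V k i W` for letters `i < j < k` with `i, k` — hence `j` —
in the same block). -/
def SylvRelT {t : ℕ} {m : Fin t → ℕ}
    (π π' : Equiv.Perm (Lex ((s : Fin t) × Fin (m s)))) : Prop :=
  ∃ a b : Lex ((s : Fin t) × Fin (m s)), a ⋖ b ∧ π' = π * Equiv.swap a b ∧
    (ofLex (π a)).1 = (ofLex (π b)).1 ∧
    ∃ e : Lex ((s : Fin t) × Fin (m s)),
      e < a ∧ min (π a) (π b) < π e ∧ π e < max (π a) (π b)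

/-- The `(m_1, …, m_t)`-sylvester congruence: the equivalence relation
generated by the `(m_1, …, m_t)`-sylvester rewriting rule. -/
def SylvT {t : ℕ} {m : Fin t → ℕ} :
    Equiv.Perm (Lex ((s : Fin t) × Fin (m s))) →
      Equiv.Perm (Lex ((s : Fin t) × Fin (m s))) → Prop :=
  Relation.EqvGen SylvRelT

/-- for a product of full-dimensional simplices, the product
slope map `Θ` is injective on each fiber of `ω ↦ A^ω`. -/
theorem prod_slope_map_injective_on_fiber (t : ℕ) (ht : 1 ≤ t) (m : Fin t → ℕ)
    (hm : ∀ s : Fin t, 1 ≤ m s)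
    (u : ∀ s : Fin t, Fin (m s + 1) → EuclideanSpace ℝ (Fin (m s)))
    (hu : ∀ s : Fin t, AffineIndependent ℝ (u s))
    (c : ∀ s : Fin t, EuclideanSpace ℝ (Fin (m s)))
    (hc : ∀ s : Fin t, ∀ i j : Fin (m s + 1), i < j → ⟪c s, u s i⟫ < ⟪c s, u s j⟫)
    (ω ω' : ∀ s : Fin t, EuclideanSpace ℝ (Fin (m s)))
    (hω : ProdGeneric u c ω) (hω' : ProdGeneric u c ω')
    (A : (∀ s : Fin t, Fin (m s + 1)) → ∀ s : Fin t, Fin (m s + 1))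
    (hA : ProdIsArbo u c ω A) (hA' : ProdIsArbo u c ω' A)
    (hΘ : prodTheta u c ω = prodTheta u c ω') :
    ω = ω' := by
  funext s
  -- main step: slopes along the arborescence edges agree
  have main : ∀ i : Fin (m s + 1), (i : ℕ) < m s →
      ∃ j : Fin (m s + 1), i < j ∧ ⟪ω s - ω' s, u s j - u s i⟫ = 0 := by
    intro i hi
    classical
    set v : ∀ r : Fin t, Fin (m r + 1) := Function.update (topVertex m) s i with hv
    have hvs : v s = i := by rw [hv]; simp
    have hvr : ∀ r, r ≠ s → v r = Fin.last (m r) := by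
      intro r hr; rw [hv]; exact Function.update_of_ne hr _ _
    have hvtop : v ≠ topVertex m := by
      intro h
      have h2 := congrFun h s
      rw [hvs] at h2
      have : (i : ℕ) = m s := by rw [h2]; rfl
      omega
    have hsetfix : ∀ ωq : ∀ r : Fin t, EuclideanSpace ℝ (Fin (m r)),
        prodTau u c ωq v = tau (u s) (c s) (ωq s) i := by
      intro ωq
      unfold prodTau tau
      congr 1
      ext x
      constructor
      · rintro ⟨s', j, hj, rfl⟩
        have hs' : s' = s := by
          by_contra h
          rw [hvr s' h] at hj
          exact absurd hj (not_lt.mpr (Fin.le_last _))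
        subst hs'
        rw [hvs] at hj ⊢
        exact ⟨j, hj, rfl⟩
      · rintro ⟨j, hj, rfl⟩
        exact ⟨s, j, by rw [hvs]; exact hj, by rw [hvs]⟩
    obtain ⟨s₁, h1, _, h3⟩ := hA.2 v hvtop
    have hs₁ : s₁ = s := by
      by_contra h
      rw [hvr s₁ h] at h1
      exact absurd h1 (not_lt.mpr (Fin.le_last _))
    rw [hs₁] at h1 h3
    obtain ⟨s₂, g1, _, g3⟩ := hA'.2 v hvtop
    have hs₂ : s₂ = s := by
      by_contra h
      rw [hvr s₂ h] at g1
      exact absurd g1 (not_lt.mpr (Fin.le_last _))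
    rw [hs₂] at g1 g3
    have hθ : tau (u s) (c s) (ω s) i = tau (u s) (c s) (ω' s) i := by
      have h := congrFun hΘ (toLex ⟨s, ⟨(i : ℕ), hi⟩⟩)
      simp only [prodTheta, ofLex_toLex] at h
      have hcast : Fin.castSucc (⟨(i : ℕ), hi⟩ : Fin (m s)) = i := rfl
      rwa [hcast] at h
    have hrho : rho (u s) (c s) (ω s) (v s) (A v s) =
        rho (u s) (c s) (ω' s) (v s) (A v s) := by
      rw [h3, g3, hsetfix ω, hsetfix ω', hθ]
    rw [hvs] at hrho h1
    refine ⟨A v s, h1, ?_⟩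
    have hcpos : (0 : ℝ) < ⟪c s, u s (A v s) - u s i⟫ := by
      rw [inner_sub_right]
      exact sub_pos.mpr (hc s i (A v s) h1)
    have hinner : ⟪ω s, u s (A v s) - u s i⟫ = ⟪ω' s, u s (A v s) - u s i⟫ := by
      unfold rho at hrho
      have h2 := congrArg (· * ⟪c s, u s (A v s) - u s i⟫) hrho
      rwa [div_mul_cancel₀ _ (ne_of_gt hcpos), div_mul_cancel₀ _ (ne_of_gt hcpos)] at h2
    rw [inner_sub_left, hinner, sub_self]
  -- by induction: ω s - ω' s is orthogonal to u s (last) - u s i for all i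
  have key : ∀ n : ℕ, ∀ i : Fin (m s + 1), m s - (i : ℕ) ≤ n →
      ⟪ω s - ω' s, u s (Fin.last (m s)) - u s i⟫ = 0 := by
    intro n
    induction n with
    | zero =>
      intro i hni
      have hlt : (i : ℕ) < m s + 1 := i.isLt
      have : i = Fin.last (m s) := Fin.ext (by simp [Fin.val_last]; omega)
      rw [this, sub_self, inner_zero_right]
    | succ n ih =>
      intro i hni
      by_cases h : (i : ℕ) < m s
      · obtain ⟨j, hij, hj0⟩ := main i h
        have hsplit : u s (Fin.last (m s)) - u s i =
            (u s (Fin.last (m s)) - u s j) + (u s j - u s i) := by abel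
        rw [hsplit, inner_add_right, hj0, add_zero]
        have hij' : (i : ℕ) < (j : ℕ) := hij
        exact ih j (by omega)
      · have hlt : (i : ℕ) < m s + 1 := i.isLt
        have : i = Fin.last (m s) := Fin.ext (by simp [Fin.val_last]; omega)
        rw [this, sub_self, inner_zero_right]
  -- linear algebra: these differences span the whole space
  have hli := (affineIndependent_iff_linearIndependent_vsub ℝ (u s)
    (Fin.last (m s))).mp (hu s)
  have hcard : Fintype.card {x : Fin (m s + 1) // x ≠ Fin.last (m s)} = m s := by
    simp [Fintype.card_subtype_compl]
  have hms := hm s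
  haveI : Nonempty {x : Fin (m s + 1) // x ≠ Fin.last (m s)} :=
    ⟨⟨0, fun h => by have := congrArg Fin.val h; simp [Fin.val_last] at this; omega⟩⟩
  have hspan := hli.span_eq_top_of_card_eq_finrank
    (by rw [hcard, finrank_euclideanSpace_fin])
  have hker : Submodule.span ℝ (Set.range fun i : {x : Fin (m s + 1) // x ≠ Fin.last (m s)} =>
      u s ↑i -ᵥ u s (Fin.last (m s))) ≤ LinearMap.ker (innerSL ℝ (ω s - ω' s)).toLinearMap := by
    rw [Submodule.span_le]
    rintro x ⟨i, rfl⟩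
    rw [SetLike.mem_coe, LinearMap.mem_ker]
    show ⟪ω s - ω' s, u s ↑i -ᵥ u s (Fin.last (m s))⟫ = 0
    have hneg : ⟪ω s - ω' s, u s ↑i - u s (Fin.last (m s))⟫ =
        -⟪ω s - ω' s, u s (Fin.last (m s)) - u s ↑i⟫ := by
      rw [← inner_neg_right, neg_sub]
    rw [vsub_eq_sub, hneg, key (m s) i.1 (by omega), neg_zero]
  have hmem : ω s - ω' s ∈ Submodule.span ℝ (Set.range
      fun i : {x : Fin (m s + 1) // x ≠ Fin.last (m s)} =>
      u s ↑i -ᵥ u s (Fin.last (m s))) := by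
    rw [hspan]; trivial
  have h0 : ⟪ω s - ω' s, ω s - ω' s⟫ = 0 := hker hmem
  have := inner_self_eq_zero.mp h0
  exact sub_eq_zero.mp this
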